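/- Let H and G be topological groups, let H₀ be an open subgroup of H, let y₀ ∈ H and set Y₀ = y₀H₀. For i = 1, …, n let K_i be an open subgroup of H having infinite index in H₀ (i.e., K_i ⊆ H₀ and the index [H₀ : K_i] is infinite) and let Y_i = y_iK_i ⊆ Y₀ be a left coset of K_i contained in Y₀, and set Y = Y₀ \ (Y₁ ∪ ⋯ ∪ Y_n). Let α : Y₀ → G be an affine map (α(x y⁻¹ z) = α(x) α(y)⁻¹ α(z) for all x, y, z ∈ Y₀). If the restriction of α to Y (with the subspace topology) is a proper map, then α : Y₀ → G is a proper map. -/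

import Mathlib

open Pointwise

/-- H₀ cannot be covered by finitely many left cosets (with representatives in H₀)
of subgroups of infinite index in H₀. -/
lemma my_exists_not_mem_cosets {H : Type*} [Group H] (H₀ : Subgroup H)
    {ι : Type*} [Fintype ι] (g : ι → H) (L : ι → Subgroup H)
    (hg : ∀ l, g l ∈ H₀) (hL : ∀ l, L l ≤ H₀) (hrel : ∀ l, (L l).relIndex H₀ = 0) :
    ∃ h ∈ H₀, ∀ l, h ∉ g l • (L l : Set H) := by
  by_contra hcon
  push_neg at hcon
  have hcov : ⋃ l ∈ (Finset.univ : Finset ι),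
      ((⟨g l, hg l⟩ : H₀) • (((L l).subgroupOf H₀ : Subgroup H₀) : Set H₀)) = Set.univ := by
    ext x
    simp only [Set.mem_univ, iff_true, Set.mem_iUnion, Finset.mem_univ, exists_true_left,
      Set.iUnion_true]
    obtain ⟨l, hl⟩ := hcon x.1 x.2
    rw [mem_leftCoset_iff] at hl
    refine ⟨l, ?_⟩
    rw [mem_leftCoset_iff, SetLike.mem_coe, Subgroup.mem_subgroupOf]
    exact hl
  obtain ⟨k, _, hk⟩ := Subgroup.exists_finiteIndex_of_leftCoset_cover hcov
  exact hk.index_ne_zero (hrel k)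

/-- Choose m elements of H₀ pairwise inequivalent modulo each K i. -/
lemma my_exists_sep {H : Type*} [Group H] (H₀ : Subgroup H) {n : ℕ}
    (K : Fin n → Subgroup H) (hKle : ∀ i, K i ≤ H₀) (hKinf : ∀ i, (K i).relIndex H₀ = 0)
    (m : ℕ) : ∃ h : Fin m → H, (∀ j, h j ∈ H₀) ∧
      ∀ j j', j ≠ j' → ∀ i, (h j)⁻¹ * h j' ∉ K i := by
  induction m with
  | zero => exact ⟨fun j => j.elim0, fun j => j.elim0, fun j => j.elim0⟩
  | succ m ih =>
    obtain ⟨h, hmem, hsep⟩ := ih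
    obtain ⟨z, hz, hz2⟩ := my_exists_not_mem_cosets H₀ (ι := Fin m × Fin n)
      (fun p => h p.1) (fun p => K p.2) (fun p => hmem p.1) (fun p => hKle p.2)
      (fun p => hKinf p.2)
    have hz2' : ∀ j i, (h j)⁻¹ * z ∉ K i := by
      intro j i hc
      exact hz2 ⟨j, i⟩ ((mem_leftCoset_iff _).mpr hc)
    refine ⟨Fin.snoc h z, ?_, ?_⟩
    · intro j
      refine Fin.lastCases ?_ ?_ j
      · simpa using hz
      · intro j₀; simpa using hmem j₀
    · intro j j' hne i
      induction j using Fin.lastCases with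
      | last =>
        induction j' using Fin.lastCases with
        | last => exact absurd rfl hne
        | cast j₀' =>
          rw [Fin.snoc_last, Fin.snoc_castSucc]
          intro hc
          have := (K i).inv_mem hc
          rw [mul_inv_rev, inv_inv] at this
          exact hz2' j₀' i this
      | cast j₀ =>
        induction j' using Fin.lastCases with
        | last =>
          rw [Fin.snoc_last, Fin.snoc_castSucc]
          exact hz2' j₀ i
        | cast j₀' =>
          rw [Fin.snoc_castSucc, Fin.snoc_castSucc]
          exact hsep j₀ j₀' (fun hc => hne (by rw [hc])) i

/-- Let `H` and `G` be topological groups, `H₀` an open subgroup of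
`H`, `y₀ ∈ H`, `Y₀ = y₀H₀`.  For `i = 1, …, n` let `K i` be an open subgroup of `H` of
infinite index in `H₀` (i.e. `K i ≤ H₀` and the index `[H₀ : K i]` is infinite) and let
`Y i = yᵢ • K i ⊆ Y₀` be a left coset of `K i` contained in `Y₀`; set
`Y = Y₀ \ (Y 1 ∪ ⋯ ∪ Y n)`.  Let `α : Y₀ → G` be an affine map.  If the restriction of
`α` to `Y` is proper, then `α : Y₀ → G` is proper.  (Properness of a map on a subset
`A ⊆ H`, with the subspace topology, is expressed intrinsically: the set
`{x ∈ A | α x ∈ K}` is compact for every compact `K ⊆ G`; infinite index is expressed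
by `(K i).relIndex H₀ = 0`.) -/
theorem affine_proper_of_proper_on_coset_ring_set
    {H G : Type*} [Group H] [TopologicalSpace H] [IsTopologicalGroup H]
    [Group G] [TopologicalSpace G] [IsTopologicalGroup G]
    (H₀ : Subgroup H) (hH₀ : IsOpen (H₀ : Set H)) (y₀ : H)
    (n : ℕ) (K : Fin n → Subgroup H) (y : Fin n → H)
    (hKopen : ∀ i, IsOpen (K i : Set H))
    (hKle : ∀ i, K i ≤ H₀)
    (hKinf : ∀ i, (K i).relIndex H₀ = 0)
    (hYsub : ∀ i, y i • (K i : Set H) ⊆ y₀ • (H₀ : Set H))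
    (α : H → G)
    (haff : ∀ x ∈ y₀ • (H₀ : Set H), ∀ u ∈ y₀ • (H₀ : Set H), ∀ z ∈ y₀ • (H₀ : Set H),
      α (x * u⁻¹ * z) = α x * (α u)⁻¹ * α z)
    (hproperY : ∀ C : Set G, IsCompact C →
      IsCompact {x ∈ (y₀ • (H₀ : Set H)) \ (⋃ i, y i • (K i : Set H)) | α x ∈ C}) :
    ∀ C : Set G, IsCompact C → IsCompact {x ∈ y₀ • (H₀ : Set H) | α x ∈ C} := by
  intro C hC
  classical
  obtain ⟨h, hhmem, hhsep⟩ := my_exists_sep H₀ K hKle hKinf (n + 1)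
  set Y₀ : Set H := y₀ • (H₀ : Set H) with hY₀def
  have hy₀Y : y₀ ∈ Y₀ := by
    rw [hY₀def, mem_leftCoset_iff]
    simpa using H₀.one_mem
  have hmulY : ∀ x ∈ Y₀, ∀ a ∈ H₀, x * a ∈ Y₀ := by
    intro x hx a ha
    rw [hY₀def, mem_leftCoset_iff] at hx ⊢
    rw [← mul_assoc]
    exact H₀.mul_mem hx ha
  set c : Fin (n + 1) → G := fun j => (α y₀)⁻¹ * α (y₀ * h j) with hcdef
  have hkey : ∀ x ∈ Y₀, ∀ j, α (x * h j) = α x * c j := by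
    intro x hx j
    have h1 : x * h j = x * y₀⁻¹ * (y₀ * h j) := by group
    rw [h1, haff x hx y₀ hy₀Y (y₀ * h j) (hmulY y₀ hy₀Y (h j) (hhmem j)), hcdef, mul_assoc]
  set B : Fin (n + 1) → Set H := fun j =>
    {x ∈ Y₀ \ ⋃ i, y i • (K i : Set H) | α x ∈ (· * c j) '' C} with hBdef
  have hDcomp : ∀ j, IsCompact ((· * (h j)⁻¹) '' B j) := fun j =>
    (hproperY _ (hC.image (continuous_mul_right (c j)))).image (continuous_mul_right _)
  have heq : {x ∈ Y₀ | α x ∈ C} = ⋃ j, (· * (h j)⁻¹) '' B j := by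
    ext x
    simp only [Set.mem_iUnion, Set.mem_image, Set.mem_setOf_eq, hBdef, Set.mem_diff]
    constructor
    · rintro ⟨hxY, hxC⟩
      have hex : ∃ j, x * h j ∉ ⋃ i, y i • (K i : Set H) := by
        by_contra hcon
        push_neg at hcon
        have hcon' : ∀ j, ∃ i, x * h j ∈ y i • (K i : Set H) := fun j =>
          Set.mem_iUnion.mp (hcon j)
        choose f hf using hcon'
        obtain ⟨j, j', hne, hfe⟩ := Fintype.exists_ne_map_eq_of_card_lt f (by simp)
        have h1 := hf j
        have h2 := hf j'
        rw [← hfe] at h2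
        rw [mem_leftCoset_iff, SetLike.mem_coe] at h1 h2
        have hmm : (h j)⁻¹ * h j' =
            ((y (f j))⁻¹ * (x * h j))⁻¹ * ((y (f j))⁻¹ * (x * h j')) := by group
        exact hhsep j j' hne (f j)
          (hmm ▸ (K (f j)).mul_mem ((K (f j)).inv_mem h1) h2)
      obtain ⟨j, hj⟩ := hex
      refine ⟨j, x * h j, ⟨⟨hmulY x hxY _ (hhmem j), fun hc => hj (Set.mem_iUnion.mpr hc)⟩, ?_⟩, by simp⟩
      rw [hkey x hxY j]
      exact ⟨α x, hxC, rfl⟩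
    · rintro ⟨j, b, ⟨⟨hbY, _⟩, g, hg, hgc⟩, rfl⟩
      have hxY : b * (h j)⁻¹ ∈ Y₀ := hmulY b hbY _ (H₀.inv_mem (hhmem j))
      refine ⟨hxY, ?_⟩
      have hk := hkey (b * (h j)⁻¹) hxY j
      rw [inv_mul_cancel_right] at hk
      have : α (b * (h j)⁻¹) = g := by
        apply mul_right_cancel (b := c j)
        rw [← hk, hgc]
      rw [this]
      exact hg
  rw [heq]
  exact isCompact_iUnion hDcomp
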